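/- Let n ≥ 1, let F = ℚ(ζ_n) be the n-th cyclotomic field with ring of integers 𝒪_F, and let ζ ∈ 𝒪_F be a primitive n-th root of unity. Let K be a subfield of F and let 𝒪_K be its ring of integers, and set d = [F : K]. Then 𝒪_F is a free 𝒪_K-module of rank d, with basis 1, ζ, ζ², …, ζ^{d−1}. -/

import Mathlib

open NumberField Polynomial Algebra
open scoped IntermediateField

universe u

lemma CF.isIntegral_of_pow_eq_one {F : Type*} [Field F] {w : F} {N : ℕ} (hN : 0 < N)
    (hw : w ^ N = 1) : IsIntegral ℤ w := by
  refine ⟨X ^ N - C 1, ?_, ?_⟩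
  · exact monic_X_pow_sub_C 1 hN.ne'
  · rw [eval₂_sub, eval₂_pow, eval₂_X, eval₂_C, hw]; simp

lemma CF.isIntegralRO_of_pow_eq_one {F : Type*} [Field F] {w : 𝓞 F} {N : ℕ} (hN : 0 < N)
    (hw : w ^ N = 1) : IsIntegral ℤ w := by
  refine ⟨X ^ N - C 1, monic_X_pow_sub_C 1 hN.ne', ?_⟩
  rw [eval₂_sub, eval₂_pow, eval₂_X, eval₂_C, hw]; simp

lemma CF.zpow_eq_pow_of_pow_eq_one {F : Type*} [Field F] {w : F} {N : ℕ} (hN : 0 < N)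
    (hw : w ^ N = 1) (B : ℤ) : w ^ B = w ^ (B % N).toNat := by
  have hw0 : w ≠ 0 := by
    intro h; rw [h, zero_pow hN.ne'] at hw; exact zero_ne_one hw
  have hNne : (N : ℤ) ≠ 0 := by exact_mod_cast hN.ne'
  have h1 : ((B % N).toNat : ℤ) = B % N := Int.toNat_of_nonneg (Int.emod_nonneg B hNne)
  calc w ^ B = w ^ ((N : ℤ) * (B / N) + B % N) := by rw [Int.mul_ediv_add_emod]
    _ = (w ^ (N : ℤ)) ^ (B / (N : ℤ)) * w ^ (B % N) := by rw [zpow_add₀ hw0, zpow_mul]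
    _ = w ^ (B % N).toNat := by
        rw [zpow_natCast, hw, one_zpow, one_mul, ← zpow_natCast w (B % (N:ℤ)).toNat, h1]

lemma CF.step (n : ℕ+) (F : Type u) [Field F] [NumberField F] [IsCyclotomicExtension {(n : ℕ)} ℚ F]
    {ζ : F} (hζ : IsPrimitiveRoot ζ (n : ℕ)) (p : ℕ+) [hp : Fact (Nat.Prime (p : ℕ))]
    (a : ℕ) (m : ℕ+)
    (hnm : (n : ℕ) = (p : ℕ) ^ a * (m : ℕ)) (hcop : Nat.Coprime ((p : ℕ) ^ a) (m : ℕ))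
    (IH : ∀ (K : Type u) [Field K] [NumberField K] [IsCyclotomicExtension {(m : ℕ)} ℚ K] (η : K),
      IsPrimitiveRoot η (m : ℕ) → ∀ y : K, IsIntegral ℤ y → y ∈ Algebra.adjoin ℤ ({η} : Set K))
    (x : F) (hx : IsIntegral ℤ x) :
    ∃ t : ℕ, ((p : ℕ) : F) ^ t * x ∈ Algebra.adjoin ℤ ({ζ} : Set F) := by
  have hn0 : 0 < (n : ℕ) := n.pos
  have hpa0 : 0 < (p : ℕ) ^ a := pow_pos p.pos a
  set ηF := ζ ^ ((p : ℕ) ^ a) with hηFdef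
  have hηF : IsPrimitiveRoot ηF (m : ℕ) := hζ.pow hn0 hnm
  set ξF := ζ ^ (m : ℕ) with hξFdef
  have hξF : IsPrimitiveRoot ξF ((p : ℕ) ^ a) := hζ.pow hn0 (by rw [hnm, mul_comm])
  set K' := ℚ⟮ηF⟯ with hK'def
  have hηFK' : ηF ∈ K' := IntermediateField.mem_adjoin_simple_self ℚ ηF
  set η : K' := ⟨ηF, hηFK'⟩ with hηdef
  have hηmap : algebraMap K' F η = ηF := rfl
  have hη : IsPrimitiveRoot η (m : ℕ) :=
    IsPrimitiveRoot.of_map_of_injective (by rw [hηmap]; exact hηF) (algebraMap K' F).injective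
  haveI : NumberField K' := ⟨⟩
  haveI hcycK' : IsCyclotomicExtension {(m : ℕ)} ℚ K' := by
    haveI := hηF.adjoin_isCyclotomicExtension ℚ
    have H : K'.toSubalgebra = Algebra.adjoin ℚ ({ηF} : Set F) :=
      IntermediateField.adjoin_simple_toSubalgebra_of_isAlgebraic (IsIntegral.of_finite ℚ ηF).isAlgebraic
    exact IsCyclotomicExtension.equiv {(m : ℕ)} ℚ _ (Subalgebra.equivOfEq _ _ H.symm)
  haveI hcycF : IsCyclotomicExtension {(p : ℕ) ^ a} K' F := by
    rw [IsCyclotomicExtension.iff_adjoin_eq_top]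
    constructor
    · intro r hr _
      rw [Set.mem_singleton_iff] at hr
      subst hr
      exact ⟨ξF, hξF⟩
    · have hζmem : ζ ∈ Algebra.adjoin K' {b : F | ∃ n : ℕ, n ∈ ({(p : ℕ) ^ a} : Set ℕ) ∧ n ≠ 0 ∧ b ^ n = 1} := by
        set A := Nat.gcdA ((p : ℕ) ^ a) (m : ℕ) with hAdef
        set B := Nat.gcdB ((p : ℕ) ^ a) (m : ℕ) with hBdef
        have hbez : (1 : ℤ) = (((p : ℕ) ^ a : ℕ) : ℤ) * A + (((m : ℕ) : ℕ) : ℤ) * B := by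
          have h := Nat.gcd_eq_gcd_ab ((p : ℕ) ^ a) (m : ℕ)
          rw [hcop] at h
          exact_mod_cast h
        have hζ0 : ζ ≠ 0 := hζ.ne_zero hn0.ne'
        have key : ζ = ηF ^ A * ξF ^ B := by
          calc ζ = ζ ^ (1 : ℤ) := (zpow_one ζ).symm
            _ = ζ ^ ((((p : ℕ) ^ a : ℕ) : ℤ) * A + (((m : ℕ) : ℕ) : ℤ) * B) := by
                rw [← hbez]
            _ = (ζ ^ (((p : ℕ) ^ a : ℕ) : ℤ)) ^ A * (ζ ^ (((m : ℕ) : ℕ) : ℤ)) ^ B := by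
                rw [zpow_add₀ hζ0, zpow_mul, zpow_mul]
            _ = ηF ^ A * ξF ^ B := by rw [zpow_natCast, zpow_natCast]
        rw [key]
        refine mul_mem ?_ ?_
        · have : ηF ^ A = algebraMap K' F (η ^ A) := by
            rw [map_zpow₀, hηmap]
          rw [this]
          exact Subalgebra.algebraMap_mem _ _
        · have hone : ξF ^ ((p : ℕ) ^ a) = 1 := hξF.pow_eq_one
          rw [CF.zpow_eq_pow_of_pow_eq_one hpa0 hone B]
          refine pow_mem (Algebra.subset_adjoin ?_) _
          exact ⟨(p : ℕ) ^ a, rfl, hpa0.ne', hone⟩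
      have h3 : Algebra.adjoin ℚ ({ζ} : Set F) = ⊤ :=
        IsCyclotomicExtension.adjoin_primitive_root_eq_top (n := (n : ℕ)) hζ
      have h2 : Algebra.adjoin ℚ ({ζ} : Set F) ≤
          Subalgebra.restrictScalars ℚ (Algebra.adjoin K'
            {b : F | ∃ n : ℕ, n ∈ ({(p : ℕ) ^ a} : Set ℕ) ∧ n ≠ 0 ∧ b ^ n = 1}) :=
        Algebra.adjoin_le (Set.singleton_subset_iff.2
          ((Subalgebra.mem_restrictScalars ℚ).2 hζmem))
      rw [_root_.eq_top_iff]
      intro y _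
      exact (Subalgebra.mem_restrictScalars ℚ).1 (h2 (by rw [h3]; trivial))
  -- degree bookkeeping
  have hirrn : Irreducible (cyclotomic (n : ℕ) ℚ) := cyclotomic.irreducible_rat hn0
  have hfF : Module.finrank ℚ F = (n : ℕ).totient := IsCyclotomicExtension.finrank F hirrn
  have hfK : Module.finrank ℚ K' = (m : ℕ).totient :=
    IsCyclotomicExtension.finrank K' (cyclotomic.irreducible_rat m.pos)
  have hmul := Module.finrank_mul_finrank ℚ K' F
  have hfrel : Module.finrank K' F = ((p : ℕ) ^ a).totient := by
    have hmpos : 0 < (m : ℕ).totient := Nat.totient_pos.2 m.pos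
    have h := hmul
    rw [hfK, hfF, hnm, Nat.totient_mul hcop] at h
    exact Nat.eq_of_mul_eq_mul_left hmpos (h.trans (mul_comm _ _))
  haveI : FiniteDimensional K' F := FiniteDimensional.right ℚ K' F
  have hintξ : IsIntegral K' ξF := IsIntegral.of_finite K' ξF
  have hadj : Algebra.adjoin K' ({ξF} : Set F) = ⊤ :=
    IsCyclotomicExtension.adjoin_primitive_root_eq_top (n := (p : ℕ) ^ a)
      hξF
  have hIF : K'⟮ξF⟯ = ⊤ := by
    rw [_root_.eq_top_iff]
    intro y _
    have hy : y ∈ Algebra.adjoin K' ({ξF} : Set F) := by rw [hadj]; trivial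
    exact Algebra.adjoin_le (Set.singleton_subset_iff.2
      (IntermediateField.mem_adjoin_simple_self K' ξF)) hy
  have hdim : (minpoly K' ξF).natDegree = Module.finrank K' F := by
    rw [← IntermediateField.adjoin.finrank hintξ, hIF]
    exact IntermediateField.finrank_top'
  have hmin : cyclotomic ((p : ℕ) ^ a) K' = minpoly K' ξF := by
    refine eq_of_monic_of_dvd_of_natDegree_le (minpoly.monic hintξ)
      (cyclotomic.monic _ K') (minpoly.dvd K' ξF ?_) ?_
    · rw [aeval_def, ← eval_map, map_cyclotomic]
      exact hξF.isRoot_cyclotomic hpa0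
    · exact le_of_eq (by rw [natDegree_cyclotomic, ← hfrel, hdim])
  have hirr' : Irreducible (cyclotomic ((p : ℕ) ^ a) K') := by
    exact hmin ▸ minpoly.irreducible hintξ
  have hξ' : IsPrimitiveRoot ξF ((p : ℕ) ^ a) := hξF
  obtain ⟨u, t, hdisc⟩ :=
    IsCyclotomicExtension.discr_prime_pow_eq_unit_mul_pow (K := K') (L := F) hξ' hirr'
  set B := hξ'.powerBasis K' with hBdef
  have hBgen : B.gen = ξF := hξ'.powerBasis_gen K'
  letI : IsScalarTower ℤ (𝓞 K') F := IsScalarTower.of_algebraMap_eq' (RingHom.ext_int _ _)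
  have hgen_int : IsIntegral (𝓞 K') B.gen := by
    rw [hBgen]
    exact (CF.isIntegral_of_pow_eq_one hpa0 hξF.pow_eq_one).tower_top
  have hx' : IsIntegral (𝓞 K') x := hx.tower_top
  have hmem := Algebra.discr_mul_isIntegral_mem_adjoin K' (R := 𝓞 K') (B := B) hgen_int hx'
  rw [hdisc, hBgen] at hmem
  have hsmul : ((((u : ℤ) : K')) * (((p : ℕ) : K')) ^ t) • x
      = (((u : ℤ) : F)) * ((((p : ℕ) : F)) ^ t * x) := by
    simp only [Algebra.smul_def, map_mul, map_pow, map_intCast, map_natCast]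
    ring
  rw [hsmul] at hmem
  set S := Algebra.adjoin (𝓞 K') ({ξF} : Set F) with hSdef
  have hel2 : (((p : ℕ) : F)) ^ t * x ∈ S := by
    have huinv : ((((u⁻¹ : ℤˣ) : ℤ)) : F) * (((u : ℤ) : F)) = 1 := by
      rw [← Int.cast_mul, Units.inv_mul, Int.cast_one]
    have : (((p : ℕ) : F)) ^ t * x
        = ((((u⁻¹ : ℤˣ) : ℤ)) : F) * ((((u : ℤ) : F)) * ((((p : ℕ) : F)) ^ t * x)) := by
      rw [← mul_assoc, huinv, one_mul]
    rw [this]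
    have hicast : ((((u⁻¹ : ℤˣ) : ℤ)) : F) ∈ S := by
      have : ((((u⁻¹ : ℤˣ) : ℤ)) : F) = algebraMap (𝓞 K') F
          (algebraMap ℤ (𝓞 K') ((u⁻¹ : ℤˣ) : ℤ)) := by
        rw [← IsScalarTower.algebraMap_apply, eq_intCast]
      rw [this]
      exact Subalgebra.algebraMap_mem _ _
    exact mul_mem hicast hmem
  refine ⟨t, ?_⟩
  have hηmem : ηF ∈ Algebra.adjoin ℤ ({ζ} : Set F) :=
    pow_mem (Algebra.subset_adjoin (Set.mem_singleton _)) _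
  have hle : Algebra.adjoin ℤ ({ηF} : Set F) ≤ Algebra.adjoin ℤ ({ζ} : Set F) :=
    Algebra.adjoin_le (Set.singleton_subset_iff.2 hηmem)
  have hsub : ∀ y ∈ S, y ∈ Algebra.adjoin ℤ ({ζ} : Set F) := by
    intro y hy
    refine Algebra.adjoin_induction (fun b hb => ?_) (fun r => ?_)
      (fun b₁ b₂ _ _ h1 h2 => add_mem h1 h2) (fun b₁ b₂ _ _ h1 h2 => mul_mem h1 h2) hy
    · rw [Set.mem_singleton_iff] at hb
      subst hb
      exact pow_mem (Algebra.subset_adjoin (Set.mem_singleton _)) _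
    · have h1 : (algebraMap (𝓞 K') F) r = algebraMap K' F (algebraMap (𝓞 K') K' r) :=
        IsScalarTower.algebraMap_apply (𝓞 K') K' F r
      have h2 : (algebraMap (𝓞 K') K' r) ∈ Algebra.adjoin ℤ ({η} : Set K') :=
        IH K' η hη _ (RingOfIntegers.isIntegral_coe r)
      have h4 : algebraMap K' F (algebraMap (𝓞 K') K' r) ∈
          Subalgebra.map (IsScalarTower.toAlgHom ℤ K' F) (Algebra.adjoin ℤ ({η} : Set K')) :=
        ⟨_, h2, rfl⟩
      rw [AlgHom.map_adjoin, Set.image_singleton] at h4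
      rw [h1]
      exact hle h4
  exact hsub _ hel2

theorem CF.main : ∀ (N : ℕ) (n : ℕ+), (n : ℕ) ≤ N →
    ∀ (F : Type u) [Field F] [NumberField F] [IsCyclotomicExtension {(n : ℕ)} ℚ F] (ζ : F),
      IsPrimitiveRoot ζ (n : ℕ) → ∀ x : F, IsIntegral ℤ x →
        x ∈ Algebra.adjoin ℤ ({ζ} : Set F) := by
  intro N
  induction N with
  | zero => exact fun n hn => absurd (Nat.lt_of_lt_of_le n.pos hn) (lt_irrefl 0)
  | succ N ih =>
    intro n hn F _ _ _ ζ hζ x hx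
    have hn0 : 0 < (n : ℕ) := n.pos
    by_cases hpp : ∃ (q k : ℕ), q.Prime ∧ (n : ℕ) = q ^ k
    · -- prime power case: mathlib
      obtain ⟨q, k, hq, hnq⟩ := hpp
      haveI : Fact (Nat.Prime q) := ⟨hq⟩
      set q' : ℕ+ := ⟨q, hq.pos⟩ with hq'def
      haveI : Fact (Nat.Prime (q' : ℕ)) := ⟨hq⟩
      have hq'' : n = q' ^ k := by
        apply PNat.coe_injective
        rw [PNat.pow_coe]
        exact hnq
      haveI : IsCyclotomicExtension {q ^ k} ℚ F := by rw [← hnq]; infer_instance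
      have hζ' : IsPrimitiveRoot ζ (q ^ k) := by
        rw [← hnq]; exact hζ
      haveI := IsCyclotomicExtension.Rat.isIntegralClosure_adjoin_singleton_of_prime_pow
        (K := F) (p := q) (k := k) hζ'
      obtain ⟨y, hy⟩ := (IsIntegralClosure.isIntegral_iff
        (A := Algebra.adjoin ℤ ({ζ} : Set F))).1 hx
      exact hy ▸ y.2
    · -- at least two primes
      have hn1 : (n : ℕ) ≠ 1 := fun h => hpp ⟨2, 0, Nat.prime_two, by rw [h, pow_zero]⟩
      -- generic construction for a prime divisor
      have key : ∀ r : ℕ, r.Prime → r ∣ (n : ℕ) →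
          ∃ t : ℕ, (r : F) ^ t * x ∈ Algebra.adjoin ℤ ({ζ} : Set F) := by
        intro r hr hrd
        haveI : Fact r.Prime := ⟨hr⟩
        set a := (n : ℕ).factorization r with hadef
        set mm := (n : ℕ) / r ^ a with hmmdef
        have hmm0 : 0 < mm := Nat.ordCompl_pos r hn0.ne'
        set m : ℕ+ := ⟨mm, hmm0⟩ with hmdef
        have hnm : (n : ℕ) = r ^ a * mm := (Nat.ordProj_mul_ordCompl_eq_self (n : ℕ) r).symm
        have hcop : Nat.Coprime (r ^ a) mm :=
          Nat.Coprime.pow_left a (Nat.coprime_ordCompl hr hn0.ne')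
        have ha1 : 0 < a := hr.factorization_pos_of_dvd hn0.ne' hrd
        have hmlt : mm < (n : ℕ) := by
          have h2 : 1 < r ^ a := Nat.one_lt_pow ha1.ne' hr.one_lt
          calc mm = 1 * mm := (one_mul mm).symm
            _ < r ^ a * mm := (Nat.mul_lt_mul_right hmm0).2 h2
            _ = (n : ℕ) := hnm.symm
        have hmN : (m : ℕ) ≤ N := by
          have h3 : (m : ℕ) = mm := rfl
          have := Nat.lt_of_lt_of_le hmlt hn
          omega
        set r' : ℕ+ := ⟨r, hr.pos⟩ with hr'def
        haveI : Fact (Nat.Prime (r' : ℕ)) := ⟨hr⟩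
        have := CF.step n F hζ r' a m hnm hcop
          (fun K _ _ _ η hη y hy => ih m hmN K η hη y hy) x hx
        exact this
      -- two distinct primes
      set p := (n : ℕ).minFac with hpdef
      have hp : p.Prime := Nat.minFac_prime hn1
      have hpd : p ∣ (n : ℕ) := Nat.minFac_dvd _
      set mm := (n : ℕ) / p ^ (n : ℕ).factorization p with hmmdef
      have hmm0 : 0 < mm := Nat.ordCompl_pos p hn0.ne'
      have hnm' : (n : ℕ) = p ^ (n : ℕ).factorization p * mm :=
        (Nat.ordProj_mul_ordCompl_eq_self (n : ℕ) p).symm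
      have hm1 : mm ≠ 1 := by
        intro h
        exact hpp ⟨p, (n : ℕ).factorization p, hp, by conv_lhs => rw [hnm', h, mul_one]⟩
      set q := mm.minFac with hqdef
      have hq : q.Prime := Nat.minFac_prime hm1
      have hqm : q ∣ mm := Nat.minFac_dvd _
      have hqd : q ∣ (n : ℕ) := hqm.trans (Nat.ordCompl_dvd _ _)
      have hpq : p ≠ q := by
        intro h
        have hcop : Nat.Coprime p mm := Nat.coprime_ordCompl hp hn0.ne'
        exact (Nat.Prime.coprime_iff_not_dvd hp).1 hcop (h ▸ hqm)
      obtain ⟨t, ht⟩ := key p hp hpd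
      obtain ⟨s, hs⟩ := key q hq hqd
      have hcop2 : IsCoprime ((p : ℤ) ^ t) ((q : ℤ) ^ s) := by
        have h1 : Nat.Coprime (p ^ t) (q ^ s) :=
          Nat.Coprime.pow t s ((Nat.coprime_primes hp hq).2 hpq)
        have := Nat.isCoprime_iff_coprime.2 h1
        push_cast at this
        exact this
      obtain ⟨α, β, hab⟩ := hcop2
      have hxeq : x = (α : F) * ((p : F) ^ t * x) + (β : F) * ((q : F) ^ s * x) := by
        have h1 : ((α * (p : ℤ) ^ t + β * (q : ℤ) ^ s : ℤ) : F) = 1 := by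
          rw [hab]; exact Int.cast_one
        push_cast at h1
        calc x = 1 * x := (one_mul x).symm
          _ = ((α : F) * (p : F) ^ t + (β : F) * (q : F) ^ s) * x := by rw [h1]
          _ = (α : F) * ((p : F) ^ t * x) + (β : F) * ((q : F) ^ s * x) := by ring
      rw [hxeq]
      have hca : ((α : ℤ) : F) ∈ Algebra.adjoin ℤ ({ζ} : Set F) := by
        have : ((α : ℤ) : F) = algebraMap ℤ F α := (eq_intCast _ _).symm
        rw [this]; exact Subalgebra.algebraMap_mem _ _
      have hcb : ((β : ℤ) : F) ∈ Algebra.adjoin ℤ ({ζ} : Set F) := by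
        have : ((β : ℤ) : F) = algebraMap ℤ F β := (eq_intCast _ _).symm
        rw [this]; exact Subalgebra.algebraMap_mem _ _
      exact add_mem (mul_mem hca ht) (mul_mem hcb hs)

/-- Let `F = ℚ(ζ_n)` be the `n`-th cyclotomic field, `ζ ∈ 𝒪_F` a primitive `n`-th
root of unity, and `K ⊆ F` a subfield with ring of integers `𝒪_K`. Setting
`d = [F : K]`, the ring `𝒪_F` is a free `𝒪_K`-module of rank `d`, with basis
`1, ζ, ζ², …, ζ^{d-1}`. -/
theorem ringOfIntegers_cyclotomic_free_over_subfield
    (n : ℕ+) (F : Type*) [Field F] [NumberField F]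
    [IsCyclotomicExtension {(n : ℕ)} ℚ F]
    (K : Type*) [Field K] [NumberField K] [Algebra K F] [IsScalarTower ℚ K F]
    (ζ : 𝓞 F) (hζ : IsPrimitiveRoot ζ n) :
    ∃ b : Module.Basis (Fin (Module.finrank K F)) (𝓞 K) (𝓞 F),
      ∀ i : Fin (Module.finrank K F), b i = ζ ^ (i : ℕ) := by
  have hζF : IsPrimitiveRoot (algebraMap (𝓞 F) F ζ) (n : ℕ) :=
    hζ.map_of_injective RingOfIntegers.coe_injective
  set ζF := algebraMap (𝓞 F) F ζ with hζFdef
  have hZ : ∀ x : F, IsIntegral ℤ x → x ∈ Algebra.adjoin ℤ ({ζF} : Set F) :=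
    fun x hx => CF.main (n : ℕ) n le_rfl F ζF hζF x hx
  -- `adjoin (𝓞 K) {ζ} = ⊤` inside `𝓞 F`
  have htop : Algebra.adjoin (𝓞 K) ({ζ} : Set (𝓞 F)) = ⊤ := by
    rw [_root_.eq_top_iff]
    intro z _
    have hz : (algebraMap (𝓞 F) F) z ∈ Algebra.adjoin ℤ ({ζF} : Set F) :=
      hZ _ (RingOfIntegers.isIntegral_coe z)
    have hmapadj := AlgHom.map_adjoin (IsScalarTower.toAlgHom ℤ (𝓞 F) F) ({ζ} : Set (𝓞 F))
    rw [Set.image_singleton] at hmapadj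
    have hz2 : (algebraMap (𝓞 F) F) z ∈
        Subalgebra.map (IsScalarTower.toAlgHom ℤ (𝓞 F) F) (Algebra.adjoin ℤ ({ζ} : Set (𝓞 F))) := by
      rw [hmapadj]; exact hz
    obtain ⟨w, hw, hwz⟩ := hz2
    have hwzeq : w = z := RingOfIntegers.coe_injective hwz
    have hle : Algebra.adjoin ℤ ({ζ} : Set (𝓞 F)) ≤
        Subalgebra.restrictScalars ℤ (Algebra.adjoin (𝓞 K) ({ζ} : Set (𝓞 F))) :=
      Algebra.adjoin_le (Set.singleton_subset_iff.2
        ((Subalgebra.mem_restrictScalars ℤ).2 (Algebra.subset_adjoin (Set.mem_singleton _))))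
    exact (Subalgebra.mem_restrictScalars ℤ).1 (hle (hwzeq ▸ hw))
  -- integrality of ζ over 𝓞 K
  have hζint : IsIntegral (𝓞 K) ζ :=
    (CF.isIntegralRO_of_pow_eq_one n.pos hζ.pow_eq_one).tower_top
  -- power basis of 𝓞 F over 𝓞 K
  let P : PowerBasis (𝓞 K) (𝓞 F) :=
    (Algebra.adjoin.powerBasis' hζint).map
      ((Subalgebra.equivOfEq _ _ htop).trans Subalgebra.topEquiv)
  have hPgen : P.gen = ζ := by
    show ((Subalgebra.equivOfEq _ _ htop).trans Subalgebra.topEquiv)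
      (Algebra.adjoin.powerBasis' hζint).gen = ζ
    rw [Algebra.adjoin.powerBasis'_gen]
    rfl
  -- dimension of the power basis
  have hdim : P.dim = Module.finrank K F := by
    have hP1 : P.dim = (minpoly (𝓞 K) ζ).natDegree := rfl
    have hmapmin : minpoly K ζF = (minpoly (𝓞 K) ζ).map (algebraMap (𝓞 K) K) :=
      minpoly.isIntegrallyClosed_eq_field_fractions K F hζint
    have h1 : (minpoly (𝓞 K) ζ).natDegree = (minpoly K ζF).natDegree := by
      rw [hmapmin, Monic.natDegree_map (minpoly.monic hζint)]
    have hadjK : Algebra.adjoin K ({ζF} : Set F) = ⊤ := by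
      have h3 : Algebra.adjoin ℚ ({ζF} : Set F) = ⊤ :=
        IsCyclotomicExtension.adjoin_primitive_root_eq_top (n := (n : ℕ)) hζF
      rw [_root_.eq_top_iff]
      intro y _
      have hy : y ∈ Algebra.adjoin ℚ ({ζF} : Set F) := by rw [h3]; trivial
      have hle : Algebra.adjoin ℚ ({ζF} : Set F) ≤
          Subalgebra.restrictScalars ℚ (Algebra.adjoin K ({ζF} : Set F)) :=
        Algebra.adjoin_le (Set.singleton_subset_iff.2
          ((Subalgebra.mem_restrictScalars ℚ).2 (Algebra.subset_adjoin (Set.mem_singleton _))))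
      exact (Subalgebra.mem_restrictScalars ℚ).1 (hle hy)
    have hζFK : IsIntegral K ζF := IsIntegral.of_finite K ζF
    have hIFtop : K⟮ζF⟯ = ⊤ := by
      rw [_root_.eq_top_iff]
      intro y _
      have hy : y ∈ Algebra.adjoin K ({ζF} : Set F) := by rw [hadjK]; trivial
      exact Algebra.adjoin_le (Set.singleton_subset_iff.2
        (IntermediateField.mem_adjoin_simple_self K ζF)) hy
    have h2 : (minpoly K ζF).natDegree = Module.finrank K F := by
      rw [← IntermediateField.adjoin.finrank hζFK, hIFtop]
      exact IntermediateField.finrank_top'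
    rw [hP1, h1, h2]
  refine ⟨P.basis.reindex (finCongr hdim), fun i => ?_⟩
  rw [Module.Basis.reindex_apply, PowerBasis.basis_eq_pow, hPgen]
  congr 1
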